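/- Let Γ be a Fuchsian group (discrete subgroup of PSL₂(ℝ)) whose stabilizer of i ∈ ℍ is trivial. For A ∈ Γ \ {1}, write H_i(A) = {z ∈ ℍ : d_ℍ(z, i) ≤ d_ℍ(z, A·i)}, and for S ⊆ Γ let Ω(S) = ⋂_{A ∈ S, A ≠ 1} H_i(A). For a > 0 let Γᵃ be the set of elements of Γ of Frobenius norm at most a. Then for every a ≥ √2, Ω(Γ) ∩ B(i, log ν(a)) = Ω(Γᵃ) ∩ B(i, log ν(a)), where B(i, r) is the open hyperbolic ball of center i and radius r, and ν(a) = √((a² + √(a⁴ − 4))/2). -/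

import Mathlib

open UpperHalfPlane

/-- The Frobenius norm of a real 2×2 matrix: `‖A‖ = √(tr(AᵀA))`. -/
noncomputable def frobNorm (A : Matrix (Fin 2) (Fin 2) ℝ) : ℝ :=
  Real.sqrt (Matrix.trace (A.transpose * A))

/-- The function `ν(a) = √((a² + √(a⁴ − 4))/2)`. -/
noncomputable def nu (a : ℝ) : ℝ := Real.sqrt ((a ^ 2 + Real.sqrt (a ^ 4 - 4)) / 2)

/-- `SL₂(ℝ)` carries the subspace topology from the space of 2×2 real matrices. -/
instance : TopologicalSpace (Matrix.SpecialLinearGroup (Fin 2) ℝ) :=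
  TopologicalSpace.induced (fun A => A.1) inferInstance

/-- `Ω(S)`: the intersection, over nonidentity `A ∈ S`, of the closed half-planes
`H_i(A) = {z ∈ ℍ : d(z,i) ≤ d(z, A·i)}`. -/
def Omega (S : Set (Matrix.SpecialLinearGroup (Fin 2) ℝ)) : Set ℍ :=
  {z : ℍ | ∀ A ∈ S, A ≠ 1 → dist z UpperHalfPlane.I ≤ dist z (A • UpperHalfPlane.I)}

/-- `Γᵃ`: the set of elements of `Γ` of Frobenius norm at most `a`. -/
def normBdd (Γ : Subgroup (Matrix.SpecialLinearGroup (Fin 2) ℝ)) (a : ℝ) :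
    Set (Matrix.SpecialLinearGroup (Fin 2) ℝ) :=
  {A | A ∈ Γ ∧ frobNorm A.1 ≤ a}

/-- Let `Γ` be a Fuchsian group whose stabilizer of `i ∈ ℍ` is trivial.  For every
`a ≥ √2`, within the open hyperbolic ball `B(i, log ν(a))` the partial Dirichlet domain
`Ω(Γᵃ)` agrees with the full Dirichlet domain `Ω(Γ)`. -/
lemma cosh_dist_I_smul (A : Matrix.SpecialLinearGroup (Fin 2) ℝ) :
    Real.cosh (dist UpperHalfPlane.I (A • UpperHalfPlane.I)) = frobNorm A.1 ^ 2 / 2 := by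
  set α := A.1 0 0 with hα
  set β := A.1 0 1 with hβ
  set γ := A.1 1 0 with hγ
  set δ := A.1 1 1 with hδ
  have hdet : α * δ - β * γ = 1 := by
    have := A.2
    rw [Matrix.det_fin_two] at this
    exact this
  have hs : 0 < γ ^ 2 + δ ^ 2 := by
    rcases eq_or_ne γ 0 with h | h
    · rcases eq_or_ne δ 0 with h' | h'
      · exfalso; rw [h, h'] at hdet; simp at hdet
      · positivity
    · positivity
  have hw : ((A • UpperHalfPlane.I : ℍ) : ℂ) =
      ((α * γ + β * δ) / (γ ^ 2 + δ ^ 2) : ℝ) + ((1 / (γ ^ 2 + δ ^ 2) : ℝ)) * Complex.I := by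
    have hden : (γ : ℂ) * Complex.I + (δ : ℂ) ≠ 0 := by
      intro h
      rw [Complex.ext_iff] at h
      simp at h
      rw [h.1, h.2] at hdet; simp at hdet
    rw [UpperHalfPlane.specialLinearGroup_apply, UpperHalfPlane.coe_mk]
    simp only [UpperHalfPlane.coe_I, Matrix.map_id, RingHom.id_apply, Algebra.algebraMap_self_apply]
    rw [div_eq_iff hden]
    have hc : ((γ:ℂ) ^ 2 + (δ:ℂ) ^ 2) ≠ 0 := by
      intro h
      have : ((γ ^ 2 + δ ^ 2 : ℝ) : ℂ) = 0 := by push_cast; linear_combination h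
      rw [Complex.ofReal_eq_zero] at this
      exact hs.ne' this
    have hdetC : (α:ℂ) * δ - β * γ = 1 := by exact_mod_cast hdet
    push_cast
    field_simp
    linear_combination (-(γ:ℂ)) * Complex.I_sq + (δ:ℂ) * Complex.I * hdetC - (γ:ℂ) * hdetC
  have hre : ((A • UpperHalfPlane.I : ℍ) : ℂ).re = (α * γ + β * δ) / (γ ^ 2 + δ ^ 2) := by
    rw [hw]; simp only [Complex.add_re, Complex.ofReal_re, Complex.mul_re,
      Complex.ofReal_im, Complex.I_re, Complex.I_im]; ring
  have him : ((A • UpperHalfPlane.I : ℍ) : ℂ).im = 1 / (γ ^ 2 + δ ^ 2) := by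
    rw [hw]; simp only [Complex.add_im, Complex.ofReal_re, Complex.mul_im,
      Complex.ofReal_im, Complex.I_re, Complex.I_im]; ring
  have hfrob : frobNorm A.1 ^ 2 = α ^ 2 + β ^ 2 + γ ^ 2 + δ ^ 2 := by
    have ht : Matrix.trace (A.1.transpose * A.1) = α ^ 2 + β ^ 2 + γ ^ 2 + δ ^ 2 := by
      simp [Matrix.trace_fin_two, Matrix.mul_apply, Fin.sum_univ_two]; ring
    rw [frobNorm, ht, Real.sq_sqrt (by positivity)]
  have key : (α * γ + β * δ) ^ 2 + 1 = (α ^ 2 + β ^ 2) * (γ ^ 2 + δ ^ 2) := by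
    linear_combination (-(α * δ - β * γ) - 1) * hdet
  rw [UpperHalfPlane.cosh_dist, hfrob]
  rw [Complex.dist_eq_re_im, Real.sq_sqrt (by positivity)]
  rw [UpperHalfPlane.I_im]
  have hL : (UpperHalfPlane.I : ℂ).re = 0 := rfl
  have hLi : (UpperHalfPlane.I : ℂ).im = 1 := rfl
  have himU : (A • UpperHalfPlane.I : ℍ).im = 1 / (γ ^ 2 + δ ^ 2) := him
  rw [hL, hLi, himU]
  rw [show ((A • UpperHalfPlane.I : ℍ) : ℂ).re = (α * γ + β * δ) / (γ ^ 2 + δ ^ 2) from hre,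
    show ((A • UpperHalfPlane.I : ℍ) : ℂ).im = 1 / (γ ^ 2 + δ ^ 2) from him]
  field_simp
  linear_combination key

lemma nu_facts (a : ℝ) (ha : Real.sqrt 2 ≤ a) :
    1 ≤ nu a ∧ Real.cosh (2 * Real.log (nu a)) = a ^ 2 / 2 := by
  have h0 : (0:ℝ) ≤ a := le_trans (Real.sqrt_nonneg 2) ha
  have h2 : 2 ≤ a ^ 2 := by
    have := Real.sq_sqrt (by norm_num : (0:ℝ) ≤ 2)
    nlinarith [Real.sqrt_nonneg 2]
  have h4 : (0:ℝ) ≤ a ^ 4 - 4 := by nlinarith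
  have hsq : Real.sqrt (a ^ 4 - 4) ^ 2 = a ^ 4 - 4 := Real.sq_sqrt h4
  have hsn : 0 ≤ Real.sqrt (a ^ 4 - 4) := Real.sqrt_nonneg _
  have hx1 : 1 ≤ (a ^ 2 + Real.sqrt (a ^ 4 - 4)) / 2 := by nlinarith
  have hnu1 : 1 ≤ nu a := by
    rw [nu, show (1:ℝ) = Real.sqrt 1 by simp]
    exact Real.sqrt_le_sqrt hx1
  have hnu0 : 0 < nu a := lt_of_lt_of_le one_pos hnu1
  refine ⟨hnu1, ?_⟩
  have hnusq : nu a ^ 2 = (a ^ 2 + Real.sqrt (a ^ 4 - 4)) / 2 :=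
    Real.sq_sqrt (by nlinarith)
  have hexp : Real.exp (2 * Real.log (nu a)) = nu a ^ 2 := by
    rw [two_mul, Real.exp_add, Real.exp_log hnu0]; ring
  have hexp' : Real.exp (-(2 * Real.log (nu a))) = (nu a ^ 2)⁻¹ := by
    rw [Real.exp_neg, hexp]
  have hinv : (nu a ^ 2)⁻¹ = (a ^ 2 - Real.sqrt (a ^ 4 - 4)) / 2 := by
    have hne : nu a ^ 2 ≠ 0 := by positivity
    field_simp
    rw [hnusq]
    nlinarith
  rw [Real.cosh_eq, hexp, hexp', hinv, hnusq]
  ring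

/-- main -/
theorem omega_inter_ball_eq (Γ : Subgroup (Matrix.SpecialLinearGroup (Fin 2) ℝ))
    (hdisc : DiscreteTopology Γ)
    (hstab : ∀ A ∈ Γ, A • UpperHalfPlane.I = UpperHalfPlane.I → A = 1)
    (a : ℝ) (ha : Real.sqrt 2 ≤ a) :
    Omega Γ ∩ Metric.ball UpperHalfPlane.I (Real.log (nu a)) =
      Omega (normBdd Γ a) ∩ Metric.ball UpperHalfPlane.I (Real.log (nu a)) := by
  obtain ⟨hnu1, hcosh2⟩ := nu_facts a ha
  have h0a : (0:ℝ) ≤ a := le_trans (Real.sqrt_nonneg 2) ha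
  ext z
  simp only [Set.mem_inter_iff, Metric.mem_ball]
  constructor
  · rintro ⟨hz, hb⟩
    exact ⟨fun A hA hA1 => hz A hA.1 hA1, hb⟩
  · rintro ⟨hz, hb⟩
    refine ⟨fun A hA hA1 => ?_, hb⟩
    by_cases hle : frobNorm A.1 ≤ a
    · exact hz A ⟨hA, hle⟩ hA1
    · push_neg at hle
      have hcoshlt : Real.cosh (2 * Real.log (nu a)) <
          Real.cosh (dist UpperHalfPlane.I (A • UpperHalfPlane.I)) := by
        rw [cosh_dist_I_smul A, hcosh2]
        have hf0 : 0 ≤ frobNorm A.1 := Real.sqrt_nonneg _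
        nlinarith
      have hd : 2 * Real.log (nu a) < dist UpperHalfPlane.I (A • UpperHalfPlane.I) := by
        have h := Real.cosh_lt_cosh.mp hcoshlt
        calc 2 * Real.log (nu a) ≤ |2 * Real.log (nu a)| := le_abs_self _
          _ < |dist UpperHalfPlane.I (A • UpperHalfPlane.I)| := h
          _ = dist UpperHalfPlane.I (A • UpperHalfPlane.I) := abs_of_nonneg dist_nonneg
      have htri := dist_triangle UpperHalfPlane.I z (A • UpperHalfPlane.I)
      have hcz : dist UpperHalfPlane.I z = dist z UpperHalfPlane.I := dist_comm _ _
      linarith
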